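/- Let α ∈ ℝ and suppose A satisfies hypothesis (H₁) with constants h₀, r₀, a₁, a₂. For each ε ∈ (0,1] let J_ε : H → H be the resolvent of A + αI and A^α_ε the associated Yosida approximation, and assume A + αI is monotone (so each J_ε is nonexpansive). Then there exist constants b₁, b₂ > 0, depending only on α, |h₀|, a₁, a₂, the norm of the embedding j : X → H, and |J₁ 0| (the resolvent at 0 with ε = 1), such that for every x ∈ H and every ε with 0 < ε < 1/(|α|+1): r₀ ‖A^α_ε x − α x‖_{X*} ≤ ( A^α_ε x − α x, x − h₀ ) + b₁|x|² + b₂. -/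

import Mathlib

open MeasureTheory Set Filter
open scoped RealInnerProductSpace Topology NNReal

noncomputable section

variable {H : Type*} [NormedAddCommGroup H] [InnerProductSpace ℝ H] [CompleteSpace H]
variable {X : Type*} [NormedAddCommGroup X] [NormedSpace ℝ X]

/-- The dual norm `‖y‖_{X*} = sup { ⟪y, j x⟫ : ‖x‖_X ≤ 1 }` of `y ∈ H`, relative to the
embedding `j : X → H`. -/
def dualNorm (j : X →L[ℝ] H) (y : H) : ℝ :=
  sSup ((fun x : X => ⟪y, j x⟫) '' {x : X | ‖x‖ ≤ 1})

/-- The set of all partition variation sums of `g` on `[0,T]`, with increments measured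
by the gauge `N`. -/
def varSums (N : H → ℝ) (g : ℝ → H) (T : ℝ) : Set ℝ :=
  { v | ∃ m : ℕ, ∃ t : Fin (m + 1) → ℝ, Monotone t ∧ t 0 = 0 ∧ t (Fin.last m) = T ∧
      v = ∑ i : Fin m, N (g (t i.succ) - g (t i.castSucc)) }

/-- `g` has bounded variation on `[0,T]` w.r.t. the gauge `N`. -/
def HasBV (N : H → ℝ) (g : ℝ → H) (T : ℝ) : Prop := BddAbove (varSums N g T)

/-- The total variation (BV norm) of `g` on `[0,T]` w.r.t. the gauge `N`. -/
def bvNorm (N : H → ℝ) (g : ℝ → H) (T : ℝ) : ℝ := sSup (varSums N g T)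

/-- A multivalued operator `A ⊆ H × H` is monotone. -/
def IsMonotoneOp (A : Set (H × H)) : Prop :=
  ∀ p ∈ A, ∀ q ∈ A, 0 ≤ ⟪p.2 - q.2, p.1 - q.1⟫

/-- A multivalued operator `A ⊆ H × H` is maximal monotone. -/
def IsMaximalMonotone (A : Set (H × H)) : Prop :=
  IsMonotoneOp A ∧ ∀ u v : H, (∀ p ∈ A, 0 ≤ ⟪v - p.2, u - p.1⟫) → (u, v) ∈ A

/-- The operator `A + αI`. -/
def addAlphaI (A : Set (H × H)) (α : ℝ) : Set (H × H) :=
  (fun p : H × H => (p.1, p.2 + α • p.1)) '' A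

/-- The domain `D(A)` of a multivalued operator. -/
def opDom (A : Set (H × H)) : Set H := {x | ∃ y, (x, y) ∈ A}

/-- Hypothesis (H₁): `A` is `α`-maximal monotone and satisfies the coercivity-type
inequality with constants `h₀, r₀, a₁, a₂`. -/
def HypH1 (A : Set (H × H)) (j : X →L[ℝ] H) (α : ℝ) (h₀ : H) (r₀ a₁ a₂ : ℝ) : Prop :=
  IsMaximalMonotone (addAlphaI A α) ∧ 0 < r₀ ∧ 0 < a₁ ∧ 0 < a₂ ∧
    ∀ p ∈ A, r₀ * dualNorm j p.2 ≤ ⟪p.2, p.1 - h₀⟫ + a₁ * ‖p.1‖ ^ 2 + a₂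

/-- `f ∈ W^{1,1}([0,T];H)`. -/
def MemW11 (f : ℝ → H) (T : ℝ) : Prop :=
  ∃ f' : ℝ → H, IntegrableOn f' (Icc 0 T) ∧
    ∀ t ∈ Icc (0:ℝ) T, f t = f 0 + ∫ s in (0:ℝ)..t, f' s

/-- `g ∈ W^{2,1}([0,T];H)`. -/
def MemW21 (g : ℝ → H) (T : ℝ) : Prop :=
  ∃ g' : ℝ → H, MemW11 g' T ∧ ∀ t ∈ Icc (0:ℝ) T, g t = g 0 + ∫ s in (0:ℝ)..t, g' s

/-- `(u,η) = GD(A;u₀,f,M)`: generalized deterministic solution of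
`du + Au(dt) ∋ f dt + dM`, `u(0) = u₀`, on `[0,T]`. -/
def IsGDSolution (A : Set (H × H)) (j : X →L[ℝ] H) (T : ℝ)
    (u₀ : H) (f : ℝ → H) (M : ℝ → X) (u η : ℝ → H) : Prop :=
  -- (d₁)
  (ContinuousOn u (Icc 0 T) ∧ (∀ t ∈ Icc (0:ℝ) T, u t ∈ closure (opDom A)) ∧ u 0 = u₀) ∧
  -- (d₂)
  (ContinuousOn η (Icc 0 T) ∧ η 0 = 0 ∧ HasBV (dualNorm j) η T) ∧
  -- (d₃)
  (∀ t ∈ Icc (0:ℝ) T, u t + η t = u₀ + (∫ s in (0:ℝ)..t, f s) + j (M t)) ∧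
  -- (d₄)
  ∃ (u0s : ℕ → H) (fs : ℕ → ℝ → H) (Ms : ℕ → ℝ → X) (us hs : ℕ → ℝ → H),
    (∀ n, u0s n ∈ opDom A) ∧
    (∀ n, MemW11 (fs n) T) ∧
    (∀ n, ContinuousOn (Ms n) (Icc 0 T) ∧ Ms n 0 = 0 ∧ MemW21 (fun t => j (Ms n t)) T) ∧
    (∀ n, ∃ L : ℝ≥0, LipschitzOnWith L (us n) (Icc 0 T)) ∧
    (∀ n, AEStronglyMeasurable (hs n) (volume.restrict (Ioc 0 T)) ∧
          ∃ C : ℝ, ∀ᵐ s ∂(volume.restrict (Ioc (0:ℝ) T)), ‖hs n s‖ ≤ C) ∧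
    (∀ n, ∀ᵐ s ∂(volume.restrict (Ioc (0:ℝ) T)), (us n s, hs n s) ∈ A) ∧
    (∀ n, ∀ t ∈ Icc (0:ℝ) T,
        us n t + (∫ s in (0:ℝ)..t, hs n s) =
          u0s n + (∫ s in (0:ℝ)..t, fs n s) + j (Ms n t)) ∧
    Tendsto u0s atTop (𝓝 u₀) ∧
    Tendsto (fun n => ∫ s in Icc (0:ℝ) T, ‖fs n s - f s‖) atTop (𝓝 0) ∧
    TendstoUniformlyOn Ms M atTop (Icc 0 T) ∧
    TendstoUniformlyOn us u atTop (Icc 0 T) ∧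
    TendstoUniformlyOn (fun n t => ∫ s in (0:ℝ)..t, hs n s) η atTop (Icc 0 T) ∧
    ∃ C : ℝ, ∀ n, ∀ v ∈ varSums (dualNorm j) (fun t => ∫ s in (0:ℝ)..t, hs n s) T, v ≤ C

end

noncomputable section

variable {H : Type*} [NormedAddCommGroup H] [InnerProductSpace ℝ H] [CompleteSpace H]

/-- `J` is the resolvent `(I + ε(A + αI))⁻¹` of `A + αI`:
for every `x`, `(x − Jx)/ε − αJx ∈ A(Jx)`. The Yosida approximation of `A + αI` is then
`A^α_ε x = (x − Jx)/ε`. -/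
def IsResolventOf (A : Set (H × H)) (α ε : ℝ) (J : H → H) : Prop :=
  ∀ x : H, (J x, ε⁻¹ • (x - J x) - α • J x) ∈ A

end

/-- Auxiliary: the dual norm is 1-Lipschitz-type subadditive w.r.t. the `H`-norm. -/
theorem dualNorm_sub_le' {H : Type*} [NormedAddCommGroup H] [InnerProductSpace ℝ H]
    {X : Type*} [NormedAddCommGroup X] [NormedSpace ℝ X]
    (j : X →L[ℝ] H) (w z : H) : dualNorm j w ≤ dualNorm j z + ‖w - z‖ * ‖j‖ := by
  have hne : ((fun x : X => ⟪w, j x⟫) '' {x : X | ‖x‖ ≤ 1}).Nonempty :=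
    ⟨_, ⟨0, by simp, rfl⟩⟩
  have hbdd : BddAbove ((fun x : X => ⟪z, j x⟫) '' {x : X | ‖x‖ ≤ 1}) := by
    refine ⟨‖z‖ * ‖j‖, ?_⟩
    rintro v ⟨x, hx, rfl⟩
    calc ⟪z, j x⟫ ≤ ‖z‖ * ‖j x‖ := real_inner_le_norm _ _
      _ ≤ ‖z‖ * (‖j‖ * ‖x‖) := by gcongr; exact j.le_opNorm x
      _ ≤ ‖z‖ * (‖j‖ * 1) := by have hx' : ‖x‖ ≤ 1 := hx; gcongr
      _ = ‖z‖ * ‖j‖ := by ring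
  refine csSup_le hne ?_
  rintro v ⟨x, hx, rfl⟩
  have h1 : ⟪z, j x⟫ ≤ dualNorm j z := le_csSup hbdd ⟨x, hx, rfl⟩
  have h2 : ⟪w - z, j x⟫ ≤ ‖w - z‖ * ‖j‖ := by
    calc ⟪w - z, j x⟫ ≤ ‖w - z‖ * ‖j x‖ := real_inner_le_norm _ _
      _ ≤ ‖w - z‖ * (‖j‖ * ‖x‖) := by gcongr; exact j.le_opNorm x
      _ ≤ ‖w - z‖ * (‖j‖ * 1) := by have hx' : ‖x‖ ≤ 1 := hx; gcongr
      _ = ‖w - z‖ * ‖j‖ := by ring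
  have h3 : ⟪w, j x⟫ = ⟪z, j x⟫ + ⟪w - z, j x⟫ := by rw [inner_sub_left]; ring
  linarith

set_option maxHeartbeats 1000000 in
/-- **The Yosida approximations inherit (H₁-ii).** Under (H₁) there exist constants
`b₁, b₂ > 0` such that for all `x ∈ H` and `0 < ε < 1/(|α|+1)`,
`r₀ ‖A^α_ε x − αx‖_{X*} ≤ (A^α_ε x − αx, x − h₀) + b₁|x|² + b₂`. -/
theorem yosida_inherits_H1
    {H : Type*} [NormedAddCommGroup H] [InnerProductSpace ℝ H] [CompleteSpace H]
    [SecondCountableTopology H]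
    {X : Type*} [NormedAddCommGroup X] [NormedSpace ℝ X]
    [SecondCountableTopology X] [SecondCountableTopology (StrongDual ℝ X)]
    (j : X →L[ℝ] H) (hj_inj : Function.Injective j) (hj_dense : DenseRange (⇑j))
    (α : ℝ) (A : Set (H × H)) (h₀ : H) (r₀ a₁ a₂ : ℝ)
    (hH1 : HypH1 A j α h₀ r₀ a₁ a₂)
    (J : ℝ → H → H)
    (hJ : ∀ ε ∈ Set.Ioc (0:ℝ) 1, IsResolventOf A α ε (J ε))
    (hmono : IsMonotoneOp (addAlphaI A α)) :
    ∃ b₁ b₂ : ℝ, 0 < b₁ ∧ 0 < b₂ ∧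
      ∀ (x : H) (ε : ℝ), 0 < ε → ε < 1 / (|α| + 1) →
        r₀ * dualNorm j (ε⁻¹ • (x - J ε x) - α • x) ≤
          ⟪ε⁻¹ • (x - J ε x) - α • x, x - h₀⟫ + b₁ * ‖x‖ ^ 2 + b₂ := by
  obtain ⟨-, hr₀, ha₁, ha₂, hineq⟩ := hH1
  set x₀ : H := J 1 0 with hx₀
  have hres₀ : (x₀, (1:ℝ)⁻¹ • ((0:H) - x₀) - α • x₀) ∈ A := hJ 1 ⟨one_pos, le_refl 1⟩ 0
  have mem₀ : (x₀, -x₀) ∈ addAlphaI A α := by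
    refine ⟨_, hres₀, ?_⟩
    simp
  set jn : ℝ := ‖j‖ with hjn
  have hjn0 : 0 ≤ jn := norm_nonneg _
  set c0 : ℝ := 3 * ‖x₀‖ with hc0
  have hc00 : 0 ≤ c0 := by positivity
  set Q : ℝ := a₁ + 4 * |α| with hQ
  set L : ℝ := 2 * a₁ * c0 + 2 * (r₀ * |α| * jn) + 4 * |α| * c0 + 2 * |α| * ‖h₀‖ with hL
  set C : ℝ := a₁ * c0 ^ 2 + r₀ * |α| * jn * c0 + |α| * c0 ^ 2 + |α| * c0 * ‖h₀‖ + a₂ with hC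
  have hL0 : 0 ≤ L := by positivity
  have hQ0 : 0 ≤ Q := by positivity
  have hC0 : 0 ≤ C := by positivity
  refine ⟨Q + L / 2 + 1, C + L / 2 + 1, by positivity, by positivity, ?_⟩
  intro x ε hε hε'
  have hα1 : (1:ℝ) ≤ |α| + 1 := by linarith [abs_nonneg α]
  have hε1 : ε ≤ 1 := by
    have : 1 / (|α| + 1) ≤ 1 := by
      rw [div_le_one (by positivity)]; exact hα1
    linarith
  set y : H := J ε x with hy
  set z : H := ε⁻¹ • (x - y) - α • y with hz
  set w : H := ε⁻¹ • (x - y) - α • x with hw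
  have hres : (y, z) ∈ A := hJ ε ⟨hε, hε1⟩ x
  have memε : (y, ε⁻¹ • (x - y)) ∈ addAlphaI A α := by
    refine ⟨_, hres, ?_⟩
    simp [hz]
  -- nonexpansiveness-type bound on ‖y - x₀‖
  have h5 : 0 ≤ ε⁻¹ * ⟪x - y, y - x₀⟫ + ⟪x₀, y - x₀⟫ := by
    have := hmono _ memε _ mem₀
    simpa [inner_add_left, real_inner_smul_left, sub_neg_eq_add] using this
  have h6 : 0 ≤ ⟪x - y, y - x₀⟫ + ε * ⟪x₀, y - x₀⟫ := by
    have h := mul_nonneg hε.le h5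
    rw [mul_add, ← mul_assoc, mul_inv_cancel₀ (ne_of_gt hε), one_mul] at h
    exact h
  have hsq : ‖y - x₀‖ ^ 2 ≤ ε * ⟪x₀, y - x₀⟫ + ⟪x - x₀, y - x₀⟫ := by
    have hid : ⟪y - x₀, y - x₀⟫ = -⟪x - y, y - x₀⟫ + ⟪x - x₀, y - x₀⟫ := by
      have e : (-(x - y)) + (x - x₀) = y - x₀ := by abel
      rw [← e, inner_add_left, inner_neg_left]
    have := real_inner_self_eq_norm_sq (y - x₀)
    linarith [h6, this.symm ▸ hid]
  have hy0 : ‖y - x₀‖ ≤ ε * ‖x₀‖ + ‖x - x₀‖ := by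
    have b1 : ⟪x₀, y - x₀⟫ ≤ ‖x₀‖ * ‖y - x₀‖ := real_inner_le_norm _ _
    have b2 : ⟪x - x₀, y - x₀⟫ ≤ ‖x - x₀‖ * ‖y - x₀‖ := real_inner_le_norm _ _
    have hcn : 0 ≤ ε * ‖x₀‖ + ‖x - x₀‖ := by positivity
    nlinarith [norm_nonneg (y - x₀), hsq, mul_le_mul_of_nonneg_left b1 hε.le]
  have hY : ‖y‖ ≤ ‖x‖ + c0 := by
    have h1 : ‖y‖ ≤ ‖x₀‖ + ‖y - x₀‖ := norm_le_norm_add_norm_sub' y x₀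
    have h2 : ‖x - x₀‖ ≤ ‖x‖ + ‖x₀‖ := norm_sub_le x x₀
    have h3 : ε * ‖x₀‖ ≤ 1 * ‖x₀‖ := mul_le_mul_of_nonneg_right hε1 (norm_nonneg x₀)
    simp only [hc0]
    linarith [hy0]
  have hD : ‖x - y‖ ≤ 2 * ‖x‖ + c0 := by
    have := norm_sub_le x y
    linarith [hY]
  -- the H1 inequality for (y,z)
  have hH : r₀ * dualNorm j z ≤ ⟪z, y - h₀⟫ + a₁ * ‖y‖ ^ 2 + a₂ := hineq (y, z) hres
  -- dual norm comparison
  have hwz : ‖w - z‖ = |α| * ‖x - y‖ := by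
    have e : w - z = α • (y - x) := by
      simp only [hw, hz, smul_sub]; abel
    rw [e, norm_smul, Real.norm_eq_abs, norm_sub_rev]
  have h7 : r₀ * dualNorm j w ≤ r₀ * dualNorm j z + r₀ * (|α| * ‖x - y‖) * jn := by
    have := mul_le_mul_of_nonneg_left (dualNorm_sub_le' j w z) hr₀.le
    rw [hwz] at this
    linarith [this]
  -- inner product identity
  have hiii : ⟪w, x - h₀⟫ = ⟪z, y - h₀⟫ + ε⁻¹ * ‖x - y‖ ^ 2 - α * ⟪y, x - y⟫
      - α * ⟪x - y, x - h₀⟫ := by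
    have e1 : w = z + α • (y - x) := by simp only [hw, hz, smul_sub]; abel
    have e2 : ⟪w, x - h₀⟫ = ⟪z, x - h₀⟫ + α * ⟪y - x, x - h₀⟫ := by
      rw [e1, inner_add_left, real_inner_smul_left]
    have e3 : ⟪z, x - h₀⟫ = ⟪z, y - h₀⟫ + ⟪z, x - y⟫ := by
      rw [← inner_add_right]; congr 1; abel
    have e4 : ⟪z, x - y⟫ = ε⁻¹ * ‖x - y‖ ^ 2 - α * ⟪y, x - y⟫ := by
      rw [hz, inner_sub_left, real_inner_smul_left, real_inner_smul_left,
        real_inner_self_eq_norm_sq]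
    have e5 : ⟪y - x, x - h₀⟫ = -⟪x - y, x - h₀⟫ := by
      rw [← inner_neg_left]; congr 1; abel
    rw [e2, e3, e4, e5]; ring
  -- inner product bounds
  have hI1 : α * ⟪y, x - y⟫ ≤ |α| * (‖y‖ * ‖x - y‖) := by
    calc α * ⟪y, x - y⟫ ≤ |α * ⟪y, x - y⟫| := le_abs_self _
      _ = |α| * |⟪y, x - y⟫| := abs_mul _ _
      _ ≤ |α| * (‖y‖ * ‖x - y‖) := by
          gcongr; exact abs_real_inner_le_norm _ _
  have hI2 : α * ⟪x - y, x - h₀⟫ ≤ |α| * (‖x - y‖ * (‖x‖ + ‖h₀‖)) := by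
    calc α * ⟪x - y, x - h₀⟫ ≤ |α * ⟪x - y, x - h₀⟫| := le_abs_self _
      _ = |α| * |⟪x - y, x - h₀⟫| := abs_mul _ _
      _ ≤ |α| * (‖x - y‖ * ‖x - h₀‖) := by gcongr; exact abs_real_inner_le_norm _ _
      _ ≤ |α| * (‖x - y‖ * (‖x‖ + ‖h₀‖)) :=
          mul_le_mul_of_nonneg_left
            (mul_le_mul_of_nonneg_left (norm_sub_le x h₀) (norm_nonneg _)) (abs_nonneg α)
  have hεD : 0 ≤ ε⁻¹ * ‖x - y‖ ^ 2 := by positivity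
  -- final polynomial estimate
  have hq1 : a₁ * ‖y‖ ^ 2 ≤ a₁ * (‖x‖ + c0) ^ 2 :=
    mul_le_mul_of_nonneg_left (pow_le_pow_left₀ (norm_nonneg y) hY 2) ha₁.le
  have hq2 : r₀ * (|α| * ‖x - y‖) * jn ≤ r₀ * |α| * jn * (2 * ‖x‖ + c0) := by
    have h := mul_le_mul_of_nonneg_left hD (show (0:ℝ) ≤ r₀ * |α| * jn by positivity)
    nlinarith [h]
  have hq3 : |α| * (‖y‖ * ‖x - y‖) ≤ |α| * ((‖x‖ + c0) * (2 * ‖x‖ + c0)) := by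
    have h := mul_le_mul hY hD (norm_nonneg _) (by positivity : (0:ℝ) ≤ ‖x‖ + c0)
    exact mul_le_mul_of_nonneg_left h (abs_nonneg α)
  have hq4 : |α| * (‖x - y‖ * (‖x‖ + ‖h₀‖)) ≤ |α| * ((2 * ‖x‖ + c0) * (‖x‖ + ‖h₀‖)) :=
    mul_le_mul_of_nonneg_left
      (mul_le_mul_of_nonneg_right hD (by positivity)) (abs_nonneg α)
  have hfinal : a₁ * ‖y‖ ^ 2 + a₂ + r₀ * (|α| * ‖x - y‖) * jn + |α| * (‖y‖ * ‖x - y‖)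
      + |α| * (‖x - y‖ * (‖x‖ + ‖h₀‖)) ≤ (Q + L / 2 + 1) * ‖x‖ ^ 2 + (C + L / 2 + 1) := by
    nlinarith [hq1, hq2, hq3, hq4, mul_nonneg hL0 (sq_nonneg (‖x‖ - 1)), sq_nonneg ‖x‖]
  linarith [h7, hH, hiii, hI1, hI2, hεD, hfinal]
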